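/- Let n ≥ 1, let U ⊆ ℂⁿ be open, and let F : ℂⁿ → ℂ be analytic on U with third partial derivatives c_{ijk}(z) = ∂_i ∂_j ∂_k F(z). Suppose there is a vector V ∈ ℂⁿ such that the matrix G with entries G_{ij} = Σ_k V_k c_{ijk}(z) is independent of z ∈ U, symmetric, and invertible. For each i define the matrix-valued function C_i(z) := F_i(z) G⁻¹, where (F_i(z))_{jk} = c_{ijk}(z), and assume the WDVV equations C_i(z) C_j(z) = C_j(z) C_i(z) hold for all i, j and all z ∈ U. Then for all z ∈ U and all indices i, j, l, m, p one has [C_i (∂_l C_m) + (∂_l C_i) C_m + (∂_m C_i) C_l]_{jp} = [C_l (∂_i C_j) + (∂_j C_l) C_i + (∂_i C_l) C_j]_{mp}, where ∂_l denotes the partial derivative with respect to z_l. (This is the coordinate form, in flat coordinates with vanishing Lie brackets, of the Hertling–Manin F-manifold integrability condition Lie_{X*Y}(*) = X*Lie_Y(*) + Y*Lie_X(*).) -/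

import Mathlib

open scoped Matrix

/-- The partial derivative of `f : ℂⁿ → ℂ` in the `i`-th coordinate direction. -/
noncomputable def partialDerivC {n : ℕ} (i : Fin n) (f : (Fin n → ℂ) → ℂ)
    (z : Fin n → ℂ) : ℂ :=
  fderiv ℂ f z (Pi.single i 1)

section Helpers

variable {n : ℕ} {U : Set (Fin n → ℂ)} {z : Fin n → ℂ} {f g : (Fin n → ℂ) → ℂ}

lemma pd_congr (hU : IsOpen U) (hz : z ∈ U) (h : ∀ w ∈ U, f w = g w) (i : Fin n) :
    partialDerivC i f z = partialDerivC i g z := by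
  unfold partialDerivC
  rw [Filter.EventuallyEq.fderiv_eq ?_]
  filter_upwards [hU.mem_nhds hz] with w hw using h w hw

lemma pd_analytic (hf : AnalyticOnNhd ℂ f U) (i : Fin n) :
    AnalyticOnNhd ℂ (partialDerivC i f) U := by
  intro x hx
  exact ((ContinuousLinearMap.apply ℂ ℂ (Pi.single i 1 : Fin n → ℂ)).analyticAt _).comp
    (hf.fderiv x hx)

lemma pd_comm (hU : IsOpen U) (hf : AnalyticOnNhd ℂ f U) (hz : z ∈ U) (i j : Fin n) :
    partialDerivC i (partialDerivC j f) z = partialDerivC j (partialDerivC i f) z := by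
  have hsymm : IsSymmSndFDerivAt ℂ f z :=
    (hf z hz).contDiffAt.isSymmSndFDerivAt (n := 2) (by norm_num)
  have hdf : DifferentiableAt ℂ (fderiv ℂ f) z := ((hf.fderiv) z hz).differentiableAt
  have key : ∀ a b : Fin n,
      partialDerivC a (partialDerivC b f) z
        = fderiv ℂ (fderiv ℂ f) z (Pi.single a 1) (Pi.single b 1) := by
    intro a b
    unfold partialDerivC
    rw [fderiv_clm_apply hdf (differentiableAt_const _)]
    simp
  rw [key i j, key j i, hsymm]

lemma pd_sum {f : Fin n → (Fin n → ℂ) → ℂ}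
    (hf : ∀ r, DifferentiableAt ℂ (f r) z) (i : Fin n) :
    partialDerivC i (fun w => ∑ r, f r w) z = ∑ r, partialDerivC i (f r) z := by
  unfold partialDerivC
  rw [fderiv_fun_sum (fun r _ => hf r)]
  simp

lemma pd_mul (hf : DifferentiableAt ℂ f z) (hg : DifferentiableAt ℂ g z) (i : Fin n) :
    partialDerivC i (fun w => f w * g w) z
      = partialDerivC i f z * g z + f z * partialDerivC i g z := by
  unfold partialDerivC
  rw [fderiv_fun_mul hf hg]
  simp [mul_comm]
  ring

lemma pd_mul_const (hf : DifferentiableAt ℂ f z) (a : ℂ) (i : Fin n) :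
    partialDerivC i (fun w => f w * a) z = partialDerivC i f z * a := by
  unfold partialDerivC
  rw [fderiv_mul_const hf]
  simp [mul_comm]

end Helpers

/-- fourth-derivative coefficients: `dC c l m j k = ∂_l c_{mjk}` -/
noncomputable def dC {n : ℕ} (c : Fin n → Fin n → Fin n → (Fin n → ℂ) → ℂ)
    (l m j k : Fin n) (z : Fin n → ℂ) : ℂ :=
  partialDerivC l (c m j k) z

/-- `SS c A p q t u v = Σ_{s,r} d_{pqtr} A_{rs} c_{usv}` -/
noncomputable def SS {n : ℕ} (c : Fin n → Fin n → Fin n → (Fin n → ℂ) → ℂ)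
    (A : Matrix (Fin n) (Fin n) ℂ) (p q t u v : Fin n) (z : Fin n → ℂ) : ℂ :=
  ∑ s, ∑ r, dC c p q t r z * A r s * c u s v z

/-- `QQ c A x y u v = Σ_{s,r} c_{xyr} A_{rs} c_{usv}` -/
noncomputable def QQ {n : ℕ} (c : Fin n → Fin n → Fin n → (Fin n → ℂ) → ℂ)
    (A : Matrix (Fin n) (Fin n) ℂ) (x y u v : Fin n) (z : Fin n → ℂ) : ℂ :=
  ∑ s, ∑ r, c x y r z * A r s * c u s v z

/-- If `F` is analytic on an open set `U ⊆ ℂⁿ`, the matrix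
`G_{ij} = Σ_k V_k ∂_i∂_j∂_k F(z)` is constant on `U`, symmetric and invertible, and the
structure-constant matrices `C_i(z) = F_i(z) G⁻¹` pairwise commute (WDVV), then the
coordinate form of the Hertling–Manin F-manifold condition holds:
`[C_i ∂_l C_m + (∂_l C_i) C_m + (∂_m C_i) C_l]_{jp} = [C_l ∂_i C_j + (∂_j C_l) C_i + (∂_i C_l) C_j]_{mp}`. -/
theorem fManifold_identity_of_wdvv_and_constant_metric
    {n : ℕ} (hn : 0 < n)
    (U : Set (Fin n → ℂ)) (hU : IsOpen U)
    (F : (Fin n → ℂ) → ℂ) (hFan : AnalyticOnNhd ℂ F U)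
    (c : Fin n → Fin n → Fin n → (Fin n → ℂ) → ℂ)
    (hc : ∀ i j k z, c i j k z = partialDerivC i (partialDerivC j (partialDerivC k F)) z)
    (V : Fin n → ℂ)
    (G : Matrix (Fin n) (Fin n) ℂ)
    (hGconst : ∀ z ∈ U, ∀ i j, (∑ k, V k * c i j k z) = G i j)
    (hGsymm : ∀ i j, G i j = G j i)
    (hGinv : IsUnit G.det)
    (Fmat : Fin n → (Fin n → ℂ) → Matrix (Fin n) (Fin n) ℂ)
    (hFmat : ∀ i z j k, Fmat i z j k = c i j k z)
    (C : Fin n → (Fin n → ℂ) → Matrix (Fin n) (Fin n) ℂ)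
    (hC : ∀ i z, C i z = Fmat i z * G⁻¹)
    (hWDVV : ∀ z ∈ U, ∀ i j, C i z * C j z = C j z * C i z)
    (DC : Fin n → Fin n → (Fin n → ℂ) → Matrix (Fin n) (Fin n) ℂ)
    (hDC : ∀ l m z j p, DC l m z j p = partialDerivC l (fun w => C m w j p) z) :
    ∀ z ∈ U, ∀ i j l m p,
      (C i z * DC l m z + DC l i z * C m z + DC m i z * C l z) j p =
      (C l z * DC i j z + DC j l z * C i z + DC i l z * C j z) m p := by
  intro z hz i j l m p
  classical
  -- basic analyticity facts
  have hcfun : ∀ i j k : Fin n,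
      c i j k = partialDerivC i (partialDerivC j (partialDerivC k F)) :=
    fun i j k => funext fun w => hc i j k w
  have hcan : ∀ i j k : Fin n, AnalyticOnNhd ℂ (c i j k) U := by
    intro i j k
    rw [hcfun]
    exact pd_analytic (pd_analytic (pd_analytic hFan _) _) _
  have hcd : ∀ (i j k : Fin n) (w : Fin n → ℂ), w ∈ U → DifferentiableAt ℂ (c i j k) w :=
    fun i j k w hw => (hcan i j k w hw).differentiableAt
  -- symmetry of c
  have csym12 : ∀ w ∈ U, ∀ a b k : Fin n, c a b k w = c b a k w := by
    intro w hw a b k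
    rw [hc, hc]
    exact pd_comm hU (pd_analytic hFan k) hw a b
  have csym23 : ∀ w ∈ U, ∀ a b k : Fin n, c a b k w = c a k b w := by
    intro w hw a b k
    rw [hc, hc]
    exact pd_congr hU hw (fun y hy => pd_comm hU hFan hy b k) a
  have csym13 : ∀ w ∈ U, ∀ a b k : Fin n, c a b k w = c k b a w := by
    intro w hw a b k
    rw [csym12 w hw, csym23 w hw, csym12 w hw]
  -- symmetry of G⁻¹
  have hGT : Gᵀ = G := by
    ext a b; exact hGsymm b a
  have hAsym : ∀ a b, G⁻¹ a b = G⁻¹ b a := by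
    intro a b
    have h : (G⁻¹)ᵀ = G⁻¹ := by rw [Matrix.transpose_nonsing_inv, hGT]
    calc G⁻¹ a b = (G⁻¹)ᵀ b a := rfl
      _ = G⁻¹ b a := by rw [h]
  have hAG : G⁻¹ * G = 1 := Matrix.nonsing_inv_mul G hGinv
  -- symmetry of dC
  have dsym12 : ∀ w ∈ U, ∀ a b e k : Fin n, dC c a b e k w = dC c b a e k w := by
    intro w hw a b e k
    unfold dC
    rw [hcfun b e k, hcfun a e k]
    exact pd_comm hU (pd_analytic (pd_analytic hFan k) e) hw a b
  have dsym23 : ∀ w ∈ U, ∀ a b e k : Fin n, dC c a b e k w = dC c a e b k w := by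
    intro w hw a b e k
    exact pd_congr hU hw (fun y hy => csym12 y hy b e k) a
  have dsym34 : ∀ w ∈ U, ∀ a b e k : Fin n, dC c a b e k w = dC c a b k e w := by
    intro w hw a b e k
    exact pd_congr hU hw (fun y hy => csym23 y hy b e k) a
  -- entries of C and DC
  have Centry : ∀ (w : Fin n → ℂ) (a b q : Fin n), C a w b q = ∑ r, c a b r w * G⁻¹ r q := by
    intro w a b q
    rw [hC, Matrix.mul_apply]
    exact Finset.sum_congr rfl fun r _ => by rw [hFmat]
  have DCentry : ∀ w ∈ U, ∀ a b e q : Fin n,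
      DC a b w e q = ∑ k, dC c a b e k w * G⁻¹ k q := by
    intro w hw a b e q
    rw [hDC]
    have hfun : (fun y => C b y e q) = fun y => ∑ k, c b e k y * G⁻¹ k q :=
      funext fun y => Centry y b e q
    rw [hfun, pd_sum (f := fun k y => c b e k y * G⁻¹ k q)
      (fun k => (hcd b e k w hw).mul_const _) a]
    exact Finset.sum_congr rfl fun k _ => pd_mul_const (hcd b e k w hw) _ a
  -- QQ equals an entry of Fmat x * G⁻¹ * Fmat u
  have QQM : ∀ (w : Fin n → ℂ) (x y u v : Fin n),
      QQ c G⁻¹ x y u v w = (Fmat x w * G⁻¹ * Fmat u w) y v := by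
    intro w x y u v
    rw [Matrix.mul_apply]
    show (∑ s, ∑ r, c x y r w * G⁻¹ r s * c u s v w) = _
    refine Finset.sum_congr rfl fun s _ => ?_
    rw [Matrix.mul_apply, Finset.sum_mul]
    exact Finset.sum_congr rfl fun r _ => by rw [hFmat, hFmat]
  -- WDVV in the form F_x A F_u = F_u A F_x
  have Msym : ∀ w ∈ U, ∀ x u : Fin n,
      Fmat x w * G⁻¹ * Fmat u w = Fmat u w * G⁻¹ * Fmat x w := by
    intro w hw x u
    have h := hWDVV w hw x u
    rw [hC, hC] at h
    calc Fmat x w * G⁻¹ * Fmat u w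
        = Fmat x w * G⁻¹ * Fmat u w * (G⁻¹ * G) := by rw [hAG, Matrix.mul_one]
      _ = Fmat x w * G⁻¹ * (Fmat u w * G⁻¹) * G := by
          simp only [Matrix.mul_assoc]
      _ = Fmat u w * G⁻¹ * (Fmat x w * G⁻¹) * G := by rw [h]
      _ = Fmat u w * G⁻¹ * Fmat x w * (G⁻¹ * G) := by simp only [Matrix.mul_assoc]
      _ = Fmat u w * G⁻¹ * Fmat x w := by rw [hAG, Matrix.mul_one]
  -- symmetries of QQ on U
  have Qwdvv : ∀ w ∈ U, ∀ x y u v : Fin n,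
      QQ c G⁻¹ x y u v w = QQ c G⁻¹ u y x v w := by
    intro w hw x y u v
    rw [QQM, QQM, Msym w hw]
  have Q12 : ∀ w ∈ U, ∀ x y u v : Fin n,
      QQ c G⁻¹ x y u v w = QQ c G⁻¹ y x u v w := by
    intro w hw x y u v
    unfold QQ
    exact Finset.sum_congr rfl fun s _ => Finset.sum_congr rfl fun r _ => by
      rw [csym12 w hw]
  have Q34 : ∀ w ∈ U, ∀ x y u v : Fin n,
      QQ c G⁻¹ x y u v w = QQ c G⁻¹ x y v u w := by
    intro w hw x y u v
    unfold QQ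
    exact Finset.sum_congr rfl fun s _ => Finset.sum_congr rfl fun r _ => by
      rw [csym13 w hw u s v]
  -- derivative of QQ
  have pdQ : ∀ w ∈ U, ∀ e x y u v : Fin n,
      partialDerivC e (QQ c G⁻¹ x y u v) w
        = SS c G⁻¹ e x y u v w + SS c G⁻¹ e u v x y w := by
    intro w hw e x y u v
    have hdterm : ∀ s r : Fin n, DifferentiableAt ℂ
        (fun y' => c x y r y' * G⁻¹ r s * c u s v y') w :=
      fun s r => ((hcd x y r w hw).mul_const _).mul (hcd u s v w hw)
    have hdin : ∀ s : Fin n, DifferentiableAt ℂ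
        (fun y' => ∑ r, c x y r y' * G⁻¹ r s * c u s v y') w :=
      fun s => DifferentiableAt.fun_sum (fun r _ => hdterm s r)
    have h1 : partialDerivC e (QQ c G⁻¹ x y u v) w
        = ∑ s, partialDerivC e (fun y' => ∑ r, c x y r y' * G⁻¹ r s * c u s v y') w := by
      exact pd_sum (f := fun s y' => ∑ r, c x y r y' * G⁻¹ r s * c u s v y') hdin e
    have step : ∀ s : Fin n,
        partialDerivC e (fun y' => ∑ r, c x y r y' * G⁻¹ r s * c u s v y') w
        = ∑ r, (dC c e x y r w * G⁻¹ r s * c u s v w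
            + c x y r w * G⁻¹ r s * dC c e u s v w) := by
      intro s
      rw [pd_sum (f := fun r y' => c x y r y' * G⁻¹ r s * c u s v y') (fun r => hdterm s r) e]
      refine Finset.sum_congr rfl fun r _ => ?_
      have h2 := pd_mul (f := fun y' => c x y r y' * G⁻¹ r s) (g := c u s v)
        ((hcd x y r w hw).mul_const _) (hcd u s v w hw) e
      rw [show (fun y' => c x y r y' * G⁻¹ r s * c u s v y')
          = fun y' => (fun y'' => c x y r y'' * G⁻¹ r s) y' * c u s v y' from rfl, h2,
        pd_mul_const (hcd x y r w hw) _ e]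
      rfl
    rw [h1]
    calc (∑ s, partialDerivC e (fun y' => ∑ r, c x y r y' * G⁻¹ r s * c u s v y') w)
        = ∑ s, ∑ r, (dC c e x y r w * G⁻¹ r s * c u s v w
            + c x y r w * G⁻¹ r s * dC c e u s v w) :=
          Finset.sum_congr rfl fun s _ => step s
      _ = (∑ s, ∑ r, dC c e x y r w * G⁻¹ r s * c u s v w)
            + ∑ s, ∑ r, c x y r w * G⁻¹ r s * dC c e u s v w := by
          rw [← Finset.sum_add_distrib]
          exact Finset.sum_congr rfl fun s _ => Finset.sum_add_distrib
      _ = SS c G⁻¹ e x y u v w + SS c G⁻¹ e u v x y w := by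
          congr 1
          show (∑ s, ∑ r, c x y r w * G⁻¹ r s * dC c e u s v w)
            = ∑ s, ∑ r, dC c e u v r w * G⁻¹ r s * c x s y w
          rw [Finset.sum_comm]
          refine Finset.sum_congr rfl fun s _ => Finset.sum_congr rfl fun r _ => ?_
          rw [csym23 w hw x y s, hAsym s r, dsym34 w hw e u r v]
          ring
    done
  -- symmetries of SS on U
  have SS12 : ∀ w ∈ U, ∀ a b e u v : Fin n,
      SS c G⁻¹ a b e u v w = SS c G⁻¹ b a e u v w := by
    intro w hw a b e u v
    unfold SS
    exact Finset.sum_congr rfl fun s _ => Finset.sum_congr rfl fun r _ => by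
      rw [dsym12 w hw]
  have SS23 : ∀ w ∈ U, ∀ a b e u v : Fin n,
      SS c G⁻¹ a b e u v w = SS c G⁻¹ a e b u v w := by
    intro w hw a b e u v
    unfold SS
    exact Finset.sum_congr rfl fun s _ => Finset.sum_congr rfl fun r _ => by
      rw [dsym23 w hw]
  -- the two differentiated WDVV identities
  have C1 : ∀ k' : Fin n, SS c G⁻¹ l i j m k' z + SS c G⁻¹ l m k' i j z
      = SS c G⁻¹ l j m i k' z + SS c G⁻¹ l i k' j m z := by
    intro k'
    have hq : ∀ w ∈ U, QQ c G⁻¹ i j m k' w = QQ c G⁻¹ j m i k' w := by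
      intro w hw
      calc QQ c G⁻¹ i j m k' w = QQ c G⁻¹ m j i k' w := Qwdvv w hw i j m k'
        _ = QQ c G⁻¹ j m i k' w := Q12 w hw m j i k'
    have h := pd_congr hU hz hq l
    rw [pdQ z hz l i j m k', pdQ z hz l j m i k'] at h
    exact h
  have C2 : ∀ k' : Fin n, SS c G⁻¹ i l k' j m z + SS c G⁻¹ i j m l k' z
      = SS c G⁻¹ i l m j k' z + SS c G⁻¹ i j k' l m z := by
    intro k'
    have hq : ∀ w ∈ U, QQ c G⁻¹ l k' j m w = QQ c G⁻¹ l m j k' w := by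
      intro w hw
      calc QQ c G⁻¹ l k' j m w = QQ c G⁻¹ k' l j m w := Q12 w hw l k' j m
        _ = QQ c G⁻¹ j l k' m w := Qwdvv w hw k' l j m
        _ = QQ c G⁻¹ l j k' m w := Q12 w hw j l k' m
        _ = QQ c G⁻¹ l j m k' w := Q34 w hw l j k' m
        _ = QQ c G⁻¹ j l m k' w := Q12 w hw l j m k'
        _ = QQ c G⁻¹ m l j k' w := Qwdvv w hw j l m k'
        _ = QQ c G⁻¹ l m j k' w := Q12 w hw m l j k'
    have h := pd_congr hU hz hq i
    rw [pdQ z hz i l k' j m, pdQ z hz i l m j k'] at h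
    exact h
  -- the key pointwise identity
  have key : ∀ k' : Fin n,
      SS c G⁻¹ l m k' i j z + SS c G⁻¹ l i j m k' z + SS c G⁻¹ m i j l k' z
      = SS c G⁻¹ i j k' l m z + SS c G⁻¹ j l m i k' z + SS c G⁻¹ i l m j k' z := by
    intro k'
    have t1 : SS c G⁻¹ m i j l k' z = SS c G⁻¹ i j m l k' z := by
      rw [SS12 z hz m i j l k', SS23 z hz i m j l k']
    have t2 : SS c G⁻¹ l j m i k' z = SS c G⁻¹ j l m i k' z := SS12 z hz l j m i k'
    have t3 : SS c G⁻¹ l i k' j m z = SS c G⁻¹ i l k' j m z := SS12 z hz l i k' j m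
    linear_combination C1 k' + C2 k' + t1 + t2 + t3
  -- triple sum reordering helper
  have swap3 : ∀ f : Fin n → Fin n → Fin n → ℂ,
      (∑ q, ∑ r, ∑ s, f q r s) = ∑ s, ∑ q, ∑ r, f q r s := by
    intro f
    have h1 : (∑ q, ∑ r, ∑ s, f q r s) = ∑ q, ∑ s, ∑ r, f q r s :=
      Finset.sum_congr rfl fun q _ => Finset.sum_comm
    rw [h1]
    exact Finset.sum_comm
  -- expansion lemmas for products of matrices
  have LemA : ∀ a b e j0 p0 : Fin n,
      (C a z * DC b e z) j0 p0 = ∑ k, SS c G⁻¹ b e k a j0 z * G⁻¹ k p0 := by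
    intro a b e j0 p0
    rw [Matrix.mul_apply]
    have h1 : (∑ q, C a z j0 q * DC b e z q p0)
        = ∑ q, ∑ r, ∑ s, c a j0 r z * G⁻¹ r q * (dC c b e q s z * G⁻¹ s p0) := by
      refine Finset.sum_congr rfl fun q _ => ?_
      rw [Centry z a j0 q, DCentry z hz b e q p0, Finset.sum_mul]
      exact Finset.sum_congr rfl fun r _ => by rw [Finset.mul_sum]
    rw [h1, swap3]
    refine Finset.sum_congr rfl fun s _ => ?_
    rw [Finset.sum_comm]
    unfold SS
    rw [Finset.sum_mul]
    refine Finset.sum_congr rfl fun q _ => ?_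
    rw [Finset.sum_mul]
    refine Finset.sum_congr rfl fun r _ => ?_
    rw [csym23 z hz a j0 q, hAsym q r, dsym34 z hz b e r s]
    ring
  have LemB : ∀ a b e j0 p0 : Fin n,
      (DC b e z * C a z) j0 p0 = ∑ k, SS c G⁻¹ b e j0 a k z * G⁻¹ k p0 := by
    intro a b e j0 p0
    rw [Matrix.mul_apply]
    have h1 : (∑ q, DC b e z j0 q * C a z q p0)
        = ∑ q, ∑ r, ∑ s, dC c b e j0 r z * G⁻¹ r q * (c a q s z * G⁻¹ s p0) := by
      refine Finset.sum_congr rfl fun q _ => ?_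
      rw [DCentry z hz b e j0 q, Centry z a q p0, Finset.sum_mul]
      exact Finset.sum_congr rfl fun r _ => by rw [Finset.mul_sum]
    rw [h1, swap3]
    refine Finset.sum_congr rfl fun s _ => ?_
    unfold SS
    rw [Finset.sum_mul]
    refine Finset.sum_congr rfl fun q _ => ?_
    rw [Finset.sum_mul]
    refine Finset.sum_congr rfl fun r _ => ?_
    ring
  -- final assembly
  simp only [Matrix.add_apply]
  rw [LemA i l m j p, LemB m l i j p, LemB l m i j p,
    LemA l i j m p, LemB i j l m p, LemB j i l m p]
  rw [← Finset.sum_add_distrib, ← Finset.sum_add_distrib,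
    ← Finset.sum_add_distrib, ← Finset.sum_add_distrib]
  refine Finset.sum_congr rfl fun k _ => ?_
  linear_combination (key k) * (G⁻¹ k p)
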